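/- Let q \ge 3 and d \le e, and let s = b_{h_{max}}(i,j) where h_{max} = min(j, d-i) and b_h(i,j) = h(d+e-i-h) + (d-j)(j-h) + \binom{j-h}{2}. Then for all 0 \le i \le d and 1 \le j \le d, (1/4) q^s < |B_j(i)| < 2 q^s. -/

import Mathlib

/-- The Gaussian binomial coefficient `[m choose l]_q = ∏_{t=1}^{l} (q^{m-t+1}-1)/(q^t-1)`. -/
def gaussBinom (q : ℚ) (m l : ℕ) : ℚ :=
  ∏ t ∈ Finset.range l, (q ^ (m - t) - 1) / (q ^ (t + 1) - 1)

/-- The `h`-th term of the eigenvalue expression for the bilinear forms graph `H_q(d,e,j)`: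
`T_h(i,j) = (-1)^{j-h} q^{eh + C(j-h,2)} [d-h, d-j]_q [d-i, h]_q`. -/
def bilinT (q : ℚ) (d e j i h : ℕ) : ℚ :=
  (-1 : ℚ) ^ (j - h) * q ^ (e * h + (j - h).choose 2) *
    gaussBinom q (d - h) (d - j) * gaussBinom q (d - i) h

/-- The eigenvalue `B_j(i)` of the bilinear forms graph `H_q(d,e,j)`. -/
def bilinB (q : ℚ) (d e j i : ℕ) : ℚ :=
  ∑ h ∈ Finset.range (min j (d - i) + 1), bilinT q d e j i h

/-- The exponent `s = b_{h_max}(i,j)` where `b_h(i,j) = h(d+e-i-h) + (d-j)(j-h) + C(j-h,2)`. -/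
def bilinS (d e i j : ℕ) : ℕ :=
  min j (d - i) * (d + e - i - min j (d - i)) + (d - j) * (j - min j (d - i)) +
    (j - min j (d - i)).choose 2


section Gauss
variable {q : ℚ} {m l : ℕ}

lemma denom_pos (hq : 1 < q) (t : ℕ) : 0 < q ^ (t + 1) - 1 := by
  have : 1 < q ^ (t + 1) := one_lt_pow₀ hq (by omega)
  linarith

lemma prodD_pos (hq : 1 < q) (l : ℕ) : 0 < ∏ t ∈ Finset.range l, (q ^ (t + 1) - 1) :=
  Finset.prod_pos fun t _ => denom_pos hq t

lemma gauss_prod_form (q : ℚ) (m l : ℕ) :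
    gaussBinom q m l = (∏ t ∈ Finset.range l, (q ^ (m - t) - 1)) /
      (∏ t ∈ Finset.range l, (q ^ (t + 1) - 1)) := by
  rw [gaussBinom, Finset.prod_div_distrib]

lemma denom_reflect (q : ℚ) (l : ℕ) :
    ∏ t ∈ Finset.range l, (q ^ (t + 1) - 1) = ∏ t ∈ Finset.range l, (q ^ (l - t) - 1) := by
  rw [← Finset.prod_range_reflect]
  refine Finset.prod_congr rfl fun t ht => ?_
  rw [Finset.mem_range] at ht
  congr 2
  omega

lemma gauss_ge (hq : 1 < q) (hlm : l ≤ m) : q ^ (l * (m - l)) ≤ gaussBinom q m l := by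
  have hq0 : (0:ℚ) < q := by linarith
  rw [gauss_prod_form, denom_reflect, ← Finset.prod_div_distrib]
  have : q ^ (l * (m - l)) = ∏ _t ∈ Finset.range l, q ^ (m - l) := by
    rw [Finset.prod_const, Finset.card_range, ← pow_mul, mul_comm]
  rw [this]
  refine Finset.prod_le_prod (fun t _ => by positivity) fun t ht => ?_
  rw [Finset.mem_range] at ht
  have hd : 0 < q ^ (l - t) - 1 := by
    have : 1 < q ^ (l - t) := one_lt_pow₀ hq (by omega)
    linarith
  rw [le_div_iff₀ hd]
  have hpe : q ^ (m - l) * q ^ (l - t) = q ^ (m - t) := by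
    rw [← pow_add]; congr 1; omega
  have h1 : (1:ℚ) ≤ q ^ (m - l) := one_le_pow₀ hq.le -- name guess
  nlinarith

end Gauss


section Gauss2
variable {q : ℚ} {m l : ℕ}

lemma gauss_pos (hq : 1 < q) (hlm : l ≤ m) : 0 < gaussBinom q m l :=
  lt_of_lt_of_le (pow_pos (by linarith) _) (gauss_ge hq hlm)

lemma prodD_claim (hq : 3 ≤ q) (l : ℕ) :
    (q ^ l + 1) * q ^ (∑ t ∈ Finset.range l, (t + 1)) ≤
      2 * q ^ l * ∏ t ∈ Finset.range l, (q ^ (t + 1) - 1) := by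
  have hq0 : (0:ℚ) < q := by linarith
  induction l with
  | zero => norm_num
  | succ n ih =>
    rw [Finset.sum_range_succ, Finset.prod_range_succ, pow_add q (∑ t ∈ Finset.range n, (t + 1)) (n + 1)]
    have hx : (1:ℚ) ≤ q ^ n := one_le_pow₀ (by linarith)
    have hT : (0:ℚ) < q ^ (∑ t ∈ Finset.range n, (t + 1)) := by positivity
    have hP : (0:ℚ) < ∏ t ∈ Finset.range n, (q ^ (t + 1) - 1) := prodD_pos (by linarith) n
    have hy : (q:ℚ) ^ (n+1) = q ^ n * q := pow_succ q n
    have hyq : q ≤ q ^ (n+1) := le_self_pow₀ (by linarith) (by omega)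
    have step1 : (q ^ (n+1) + 1) * q ^ (n+1) ≤ (q ^ n + 1) * (q * (q ^ (n+1) - 1)) := by
      nlinarith [mul_nonneg (show (0:ℚ) ≤ q - 3 by linarith) (show (0:ℚ) ≤ q ^ (n+1) by positivity)]
    have hc1 : (0:ℚ) ≤ q * (q ^ (n+1) - 1) := by
      have := denom_pos (show (1:ℚ) < q by linarith) n
      positivity
    calc (q ^ (n+1) + 1) * (q ^ (∑ t ∈ Finset.range n, (t + 1)) * q ^ (n + 1))
        = ((q ^ (n+1) + 1) * q ^ (n+1)) * q ^ (∑ t ∈ Finset.range n, (t + 1)) := by ring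
      _ ≤ ((q ^ n + 1) * (q * (q ^ (n+1) - 1))) * q ^ (∑ t ∈ Finset.range n, (t + 1)) :=
          mul_le_mul_of_nonneg_right step1 hT.le
      _ = ((q ^ n + 1) * q ^ (∑ t ∈ Finset.range n, (t + 1))) * (q * (q ^ (n+1) - 1)) := by ring
      _ ≤ (2 * q ^ n * ∏ t ∈ Finset.range n, (q ^ (t + 1) - 1)) * (q * (q ^ (n+1) - 1)) :=
          mul_le_mul_of_nonneg_right ih hc1
      _ = 2 * q ^ (n + 1) * ((∏ t ∈ Finset.range n, (q ^ (t + 1) - 1)) * (q ^ (n + 1) - 1)) := by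
          rw [hy]; ring

lemma prodD_lower (hq : 3 ≤ q) (l : ℕ) :
    q ^ (∑ t ∈ Finset.range l, (t + 1)) < 2 * ∏ t ∈ Finset.range l, (q ^ (t + 1) - 1) := by
  have hq0 : (0:ℚ) < q := by linarith
  have h := prodD_claim hq l
  have hx : (0:ℚ) < q ^ l := by positivity
  have hT : (0:ℚ) < q ^ (∑ t ∈ Finset.range l, (t + 1)) := by positivity
  nlinarith

lemma gauss_lt2 (hq : 3 ≤ q) (hlm : l ≤ m) : gaussBinom q m l < 2 * q ^ (l * (m - l)) := by
  have hq1 : (1:ℚ) < q := by linarith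
  have hq0 : (0:ℚ) < q := by linarith
  have hD : (0:ℚ) < ∏ t ∈ Finset.range l, (q ^ (t + 1) - 1) := prodD_pos hq1 l
  rw [gauss_prod_form, div_lt_iff₀ hD]
  have hN : (∏ t ∈ Finset.range l, (q ^ (m - t) - 1)) ≤
      q ^ (l * (m - l)) * q ^ (∑ t ∈ Finset.range l, (t + 1)) := by
    have h1 : (∏ t ∈ Finset.range l, (q ^ (m - t) - 1)) ≤
        ∏ t ∈ Finset.range l, (q ^ (m - l) * q ^ (l - t)) := by
      refine Finset.prod_le_prod (fun t ht => ?_) (fun t ht => ?_)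
      · have : (1:ℚ) ≤ q ^ (m - t) := one_le_pow₀ (by linarith)
        linarith
      · rw [Finset.mem_range] at ht
        rw [← pow_add, show m - l + (l - t) = m - t by omega]
        linarith
    calc (∏ t ∈ Finset.range l, (q ^ (m - t) - 1)) ≤
        ∏ t ∈ Finset.range l, (q ^ (m - l) * q ^ (l - t)) := h1
      _ = q ^ (l * (m - l)) * ∏ t ∈ Finset.range l, q ^ (l - t) := by
          rw [Finset.prod_mul_distrib, Finset.prod_const, Finset.card_range, ← pow_mul, mul_comm (m-l) l]
      _ = q ^ (l * (m - l)) * ∏ t ∈ Finset.range l, q ^ (t + 1) := by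
          congr 1
          rw [← Finset.prod_range_reflect]
          refine Finset.prod_congr rfl fun t ht => ?_
          rw [Finset.mem_range] at ht
          congr 1
          omega
      _ = q ^ (l * (m - l)) * q ^ (∑ t ∈ Finset.range l, (t + 1)) := by
          congr 1
          rw [Finset.prod_pow_eq_pow_sum]
  have h2 := prodD_lower hq l
  have hx : (0:ℚ) < q ^ (l * (m - l)) := by positivity
  nlinarith

lemma gauss_self (hq : 1 < q) (m : ℕ) : gaussBinom q m m = 1 := by
  rw [gauss_prod_form]
  rw [show (∏ t ∈ Finset.range m, (q ^ (m - t) - 1)) = ∏ t ∈ Finset.range m, (q ^ (t+1) - 1) from ?_]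
  · exact div_self (ne_of_gt (prodD_pos hq m))
  · rw [← Finset.prod_range_reflect]
    refine Finset.prod_congr rfl fun t ht => ?_
    rw [Finset.mem_range] at ht
    congr 2
    omega

lemma gauss_step (hq : 1 < q) (m l : ℕ) :
    (q ^ (m - l) - 1) * gaussBinom q m l = (q ^ m - 1) * gaussBinom q (m - 1) l := by
  have hD : (0:ℚ) < ∏ t ∈ Finset.range l, (q ^ (t + 1) - 1) := prodD_pos hq l
  have key : (∏ t ∈ Finset.range l, (q ^ (m - t) - 1)) * (q ^ (m - l) - 1)
      = (q ^ m - 1) * ∏ t ∈ Finset.range l, (q ^ (m - 1 - t) - 1) := by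
    have h1 := Finset.prod_range_succ (fun t => q ^ (m - t) - 1) l
    have h2 := Finset.prod_range_succ' (fun t => q ^ (m - t) - 1) l
    rw [h1] at h2
    rw [h2, show m - 0 = m from rfl]
    rw [show (∏ t ∈ Finset.range l, (q ^ (m - (t+1)) - 1)) = ∏ t ∈ Finset.range l, (q ^ (m - 1 - t) - 1) from ?_]
    · ring
    · refine Finset.prod_congr rfl fun t ht => ?_
      congr 2
      omega
  rw [gauss_prod_form, gauss_prod_form]
  field_simp
  linear_combination key

end Gauss2


lemma alt_sum_rec (A : ℕ → ℚ) (n : ℕ) :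
    (∑ h ∈ Finset.range (n + 2), (-1:ℚ) ^ (n + 1 - h) * A h)
      = A (n + 1) - ∑ h ∈ Finset.range (n + 1), (-1:ℚ) ^ (n - h) * A h := by
  rw [Finset.sum_range_succ]
  have hcg : ∀ h ∈ Finset.range (n + 1), (-1:ℚ) ^ (n + 1 - h) * A h = -((-1:ℚ) ^ (n - h) * A h) := by
    intro h hh
    rw [Finset.mem_range] at hh
    rw [show n + 1 - h = (n - h) + 1 by omega, pow_succ]
    ring
  rw [Finset.sum_congr rfl hcg, Finset.sum_neg_distrib]
  simp only [Nat.sub_self, pow_zero, one_mul]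
  ring

lemma alt_sum_aux (A : ℕ → ℚ) (n : ℕ) (hpos : ∀ h, h ≤ n → 0 < A h)
    (hmono : ∀ h, h < n → A h ≤ A (h + 1)) :
    0 ≤ (∑ h ∈ Finset.range (n + 1), (-1:ℚ) ^ (n - h) * A h) ∧
    (∑ h ∈ Finset.range (n + 1), (-1:ℚ) ^ (n - h) * A h) ≤ A n := by
  induction n with
  | zero =>
    have hs : (∑ h ∈ Finset.range (0 + 1), (-1:ℚ) ^ (0 - h) * A h) = A 0 := by simp
    rw [hs]
    exact ⟨(hpos 0 le_rfl).le, le_rfl⟩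
  | succ n ih =>
    obtain ⟨ih1, ih2⟩ := ih (fun h hh => hpos h (by omega)) (fun h hh => hmono h (by omega))
    rw [show n + 1 + 1 = n + 2 from rfl, alt_sum_rec]
    have h1 : A n ≤ A (n + 1) := hmono n (by omega)
    constructor <;> linarith

lemma alt_sum_bounds (A : ℕ → ℚ) (n : ℕ) (hpos : ∀ h, h ≤ n → 0 < A h)
    (hrat : ∀ h, h < n → A h < (3 / 4 : ℚ) * A (h + 1)) :
    (1 / 4 : ℚ) * A n < (∑ h ∈ Finset.range (n + 1), (-1:ℚ) ^ (n - h) * A h) ∧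
    (∑ h ∈ Finset.range (n + 1), (-1:ℚ) ^ (n - h) * A h) ≤ A n := by
  have hmono : ∀ h, h < n → A h ≤ A (h + 1) := by
    intro h hh
    have h1 := hrat h hh
    have h2 := hpos (h + 1) (by omega)
    linarith
  obtain ⟨h0, h1⟩ := alt_sum_aux A n hpos hmono
  rcases n with _ | m
  · have hs : (∑ h ∈ Finset.range (0 + 1), (-1:ℚ) ^ (0 - h) * A h) = A 0 := by simp
    rw [hs]
    exact ⟨by linarith [hpos 0 le_rfl], le_rfl⟩
  · obtain ⟨a0, a1⟩ := alt_sum_aux A m (fun h hh => hpos h (by omega)) (fun h hh => hmono h (by omega))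
    have hr := hrat m (by omega)
    rw [show m + 1 + 1 = m + 2 from rfl, alt_sum_rec] at *
    constructor <;> linarith


lemma choose_two_succ (n : ℕ) : (n + 1).choose 2 = n.choose 2 + n := by
  rw [Nat.choose_succ_succ, Nat.choose_one_right, Nat.add_comm]

/-- The positive magnitude of the `h`-th term. -/
def bilinA (q : ℚ) (d e j i h : ℕ) : ℚ :=
  q ^ (e * h + (j - h).choose 2) * gaussBinom q (d - h) (d - j) * gaussBinom q (d - i) h

set_option maxHeartbeats 2000000 in
theorem bilinB_bounds (q d e i j : ℕ) (hq : 3 ≤ q) (hde : d ≤ e)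
    (hi : i ≤ d) (hj1 : 1 ≤ j) (hj2 : j ≤ d) :
    (1 / 4 : ℚ) * (q : ℚ) ^ bilinS d e i j < |bilinB (q : ℚ) d e j i| ∧
    |bilinB (q : ℚ) d e j i| < 2 * (q : ℚ) ^ bilinS d e i j := by
  have hq3 : (3 : ℚ) ≤ (q : ℚ) := by exact_mod_cast hq
  have hq1 : (1 : ℚ) < (q : ℚ) := by linarith
  have hq0 : (0 : ℚ) < (q : ℚ) := by linarith
  set Q : ℚ := (q : ℚ) with hQdef
  set H : ℕ := min j (d - i) with hH
  have hHj : H ≤ j := Nat.min_le_left _ _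
  have hHdi : H ≤ d - i := Nat.min_le_right _ _
  set A : ℕ → ℚ := fun h => bilinA Q d e j i h with hA
  -- positivity
  have hApos : ∀ h, h ≤ H → 0 < A h := by
    intro h hh
    have g1 : 0 < gaussBinom Q (d - h) (d - j) := gauss_pos hq1 (by omega)
    have g2 : 0 < gaussBinom Q (d - i) h := gauss_pos hq1 (by omega)
    have : (0:ℚ) < Q ^ (e * h + (j - h).choose 2) := by positivity
    simp only [hA, bilinA]
    exact mul_pos (mul_pos this g1) g2
  -- ratio bound
  have hrat : ∀ h, h < H → A h < (3 / 4 : ℚ) * A (h + 1) := by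
    intro h hh
    have hhj : h + 1 ≤ j := le_trans (by omega) hHj
    have hhdi : h + 1 ≤ d - i := le_trans (by omega) hHdi
    have hhd : h + 1 ≤ d := by omega
    -- step identities
    have R1 : (Q ^ (j - h) - 1) * gaussBinom Q (d - h) (d - j)
        = (Q ^ (d - h) - 1) * gaussBinom Q (d - (h + 1)) (d - j) := by
      have hs := gauss_step hq1 (d - h) (d - j)
      rw [show d - h - (d - j) = j - h by omega, show d - h - 1 = d - (h + 1) by omega] at hs
      exact hs
    have R2 : gaussBinom Q (d - i) (h + 1) * (Q ^ (h + 1) - 1)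
        = gaussBinom Q (d - i) h * (Q ^ (d - i - h) - 1) := by
      have := Finset.prod_range_succ (fun t => (Q ^ (d - i - t) - 1) / (Q ^ (t + 1) - 1)) h
      rw [gaussBinom, this, ← gaussBinom]
      have hd := denom_pos hq1 h
      field_simp
    have epow : Q ^ (e * h + (j - h).choose 2) * Q ^ e
        = Q ^ (e * (h + 1) + (j - (h + 1)).choose 2) * Q ^ (j - (h + 1)) := by
      rw [← pow_add, ← pow_add]
      congr 1
      have hch : (j - h).choose 2 = (j - (h + 1)).choose 2 + (j - (h + 1)) := by
        rw [show j - h = (j - (h + 1)) + 1 by omega, choose_two_succ]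
      rw [hch]
      ring
    have key : A h * (Q ^ e * (Q ^ (j - h) - 1) * (Q ^ (d - i - h) - 1))
        = A (h + 1) * (Q ^ (j - (h + 1)) * (Q ^ (d - h) - 1) * (Q ^ (h + 1) - 1)) := by
      simp only [hA, bilinA]
      calc Q ^ (e * h + (j - h).choose 2) * gaussBinom Q (d - h) (d - j) * gaussBinom Q (d - i) h *
            (Q ^ e * (Q ^ (j - h) - 1) * (Q ^ (d - i - h) - 1))
          = (Q ^ (e * h + (j - h).choose 2) * Q ^ e) *
              ((Q ^ (j - h) - 1) * gaussBinom Q (d - h) (d - j)) *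
              (gaussBinom Q (d - i) h * (Q ^ (d - i - h) - 1)) := by ring
        _ = (Q ^ (e * (h + 1) + (j - (h + 1)).choose 2) * Q ^ (j - (h + 1))) *
              ((Q ^ (d - h) - 1) * gaussBinom Q (d - (h + 1)) (d - j)) *
              (gaussBinom Q (d - i) (h + 1) * (Q ^ (h + 1) - 1)) := by
            rw [epow, R1, ← R2]
        _ = Q ^ (e * (h + 1) + (j - (h + 1)).choose 2) * gaussBinom Q (d - (h + 1)) (d - j) *
              gaussBinom Q (d - i) (h + 1) *
              (Q ^ (j - (h + 1)) * (Q ^ (d - h) - 1) * (Q ^ (h + 1) - 1)) := by ring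
    -- coefficient inequality
    have f1 : (2 / 3 : ℚ) * Q ^ (j - h) ≤ Q ^ (j - h) - 1 := by
      have h3 : (3:ℚ) ≤ Q ^ (j - h) := le_trans hq3 (le_self_pow₀ (by linarith) (by omega))
      linarith
    have f2 : (2 / 3 : ℚ) * Q ^ (d - i - h) ≤ Q ^ (d - i - h) - 1 := by
      have h3 : (3:ℚ) ≤ Q ^ (d - i - h) := le_trans hq3 (le_self_pow₀ (by linarith) (by omega))
      linarith
    have coeff : Q ^ (j - (h + 1)) * (Q ^ (d - h) - 1) * (Q ^ (h + 1) - 1)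
        < (3 / 4 : ℚ) * (Q ^ e * (Q ^ (j - h) - 1) * (Q ^ (d - i - h) - 1)) := by
      have hE : (j - (h + 1)) + (d - h) + (h + 1) + 1 ≤ e + (j - h) + (d - i - h) := by omega
      have p1 : (0:ℚ) < Q ^ (d - h) - 1 := denom_pos hq1 (d - h - 1) |>.trans_le (by
          rw [show d - h - 1 + 1 = d - h by omega])
      have p2 : (0:ℚ) < Q ^ (h + 1) - 1 := denom_pos hq1 h
      have step1 : Q ^ (j - (h + 1)) * (Q ^ (d - h) - 1) * (Q ^ (h + 1) - 1)
          < Q ^ ((j - (h + 1)) + (d - h) + (h + 1)) := by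
        have q1 : (0:ℚ) < Q ^ (j - (h + 1)) := by positivity
        have q2 : Q ^ (d - h) - 1 < Q ^ (d - h) := by linarith
        have q3 : Q ^ (h + 1) - 1 < Q ^ (h + 1) := by linarith
        have s1 : Q ^ (j - (h + 1)) * (Q ^ (d - h) - 1) ≤ Q ^ (j - (h + 1)) * Q ^ (d - h) :=
          mul_le_mul_of_nonneg_left q2.le q1.le
        have : Q ^ ((j - (h + 1)) + (d - h) + (h + 1))
            = Q ^ (j - (h + 1)) * Q ^ (d - h) * Q ^ (h + 1) := by rw [pow_add, pow_add]
        rw [this]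
        exact mul_lt_mul' s1 q3 p2.le (by positivity)
      have step2 : Q ^ ((j - (h + 1)) + (d - h) + (h + 1))
          ≤ (1 / 3 : ℚ) * Q ^ (e + (j - h) + (d - i - h)) := by
        have hmono : Q ^ ((j - (h + 1)) + (d - h) + (h + 1) + 1) ≤ Q ^ (e + (j - h) + (d - i - h)) :=
          pow_le_pow_right₀ (by linarith) hE
        rw [pow_succ] at hmono
        have : (0:ℚ) < Q ^ ((j - (h + 1)) + (d - h) + (h + 1)) := by positivity
        nlinarith
      have step3 : (1 / 3 : ℚ) * Q ^ (e + (j - h) + (d - i - h))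
          ≤ (3 / 4 : ℚ) * (Q ^ e * (Q ^ (j - h) - 1) * (Q ^ (d - i - h) - 1)) := by
        have pe : (0:ℚ) < Q ^ e := by positivity
        have pjh : (0:ℚ) < Q ^ (j - h) := by positivity
        have hmm : (2 / 3 * Q ^ (j - h)) * (2 / 3 * Q ^ (d - i - h))
            ≤ (Q ^ (j - h) - 1) * (Q ^ (d - i - h) - 1) :=
          mul_le_mul f1 f2 (by positivity) (by linarith)
        calc (1 / 3 : ℚ) * Q ^ (e + (j - h) + (d - i - h))
            = (3 / 4 : ℚ) * (Q ^ e * ((2 / 3 * Q ^ (j - h)) * (2 / 3 * Q ^ (d - i - h)))) := by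
              rw [pow_add, pow_add]; ring
          _ ≤ (3 / 4 : ℚ) * (Q ^ e * ((Q ^ (j - h) - 1) * (Q ^ (d - i - h) - 1))) := by gcongr
          _ = (3 / 4 : ℚ) * (Q ^ e * (Q ^ (j - h) - 1) * (Q ^ (d - i - h) - 1)) := by ring
      linarith
    have c1pos : (0:ℚ) < Q ^ e * (Q ^ (j - h) - 1) * (Q ^ (d - i - h) - 1) := by
      have pe : (0:ℚ) < Q ^ e := by positivity
      have pjh : (0:ℚ) < Q ^ (j - h) := pow_pos hq0 _
      have pdih : (0:ℚ) < Q ^ (d - i - h) := pow_pos hq0 _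
      have b1 : (0:ℚ) < Q ^ (j - h) - 1 := by linarith
      have b2 : (0:ℚ) < Q ^ (d - i - h) - 1 := by linarith
      exact mul_pos (mul_pos pe b1) b2
    have hA1 : 0 < A (h + 1) := hApos (h + 1) (by omega)
    nlinarith [mul_pos hA1 (sub_pos.2 coeff), key, c1pos]
  -- relating bilinB to the alternating sum
  have hBe : bilinB Q d e j i = (-1:ℚ) ^ (j - H) * ∑ h ∈ Finset.range (H + 1), (-1:ℚ) ^ (H - h) * A h := by
    rw [bilinB, Finset.mul_sum, ← hH]
    refine Finset.sum_congr rfl fun h hh => ?_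
    rw [Finset.mem_range] at hh
    rw [bilinT]
    simp only [hA, bilinA]
    rw [← mul_assoc ((-1:ℚ) ^ (j - H)), ← pow_add, show j - H + (H - h) = j - h by omega]
    ring
  obtain ⟨hS1, hS2⟩ := alt_sum_bounds A H hApos hrat
  have hAH : 0 < A H := hApos H le_rfl
  have hSpos : 0 < ∑ h ∈ Finset.range (H + 1), (-1:ℚ) ^ (H - h) * A h := by linarith
  have habs : |bilinB Q d e j i| = ∑ h ∈ Finset.range (H + 1), (-1:ℚ) ^ (H - h) * A h := by
    rw [hBe, abs_mul, abs_pow, abs_neg, abs_one, one_pow, one_mul, abs_of_pos hSpos]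
  -- lower bound on A H
  have hlow : Q ^ bilinS d e i j ≤ A H := by
    have g1 : Q ^ ((d - j) * (d - H - (d - j))) ≤ gaussBinom Q (d - H) (d - j) :=
      gauss_ge hq1 (by omega)
    have g2 : Q ^ (H * (d - i - H)) ≤ gaussBinom Q (d - i) H := gauss_ge hq1 hHdi
    have hexp : bilinS d e i j
        = (e * H + (j - H).choose 2) + (d - j) * (d - H - (d - j)) + H * (d - i - H) := by
      rw [bilinS, ← hH, show d - H - (d - j) = j - H by omega,
        show d + e - i - H = e + (d - i - H) by omega]
      ring
    calc Q ^ bilinS d e i j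
        = Q ^ (e * H + (j - H).choose 2) * Q ^ ((d - j) * (d - H - (d - j))) *
            Q ^ (H * (d - i - H)) := by rw [hexp, pow_add, pow_add]
      _ ≤ A H := by
          simp only [hA, bilinA]
          have p0 : (0:ℚ) ≤ Q ^ (e * H + (j - H).choose 2) := by positivity
          refine mul_le_mul (mul_le_mul le_rfl g1 (by positivity) p0) g2 (by positivity) ?_
          have := gauss_pos hq1 (show d - j ≤ d - H by omega) (q := Q)
          positivity
  -- upper bound on A H
  have hup : A H < 2 * Q ^ bilinS d e i j := by
    rcases le_total j (d - i) with hji | hij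
    · have hHv : H = j := by omega
      have hexp : bilinS d e i j = e * j + j * (d - i - j) := by
        rw [bilinS, show min j (d - i) = j by omega, Nat.sub_self,
          show d + e - i - j = e + (d - i - j) by omega,
          show Nat.choose 0 2 = 0 from rfl]
        ring
      have g2 : gaussBinom Q (d - i) j < 2 * Q ^ (j * (d - i - j)) := gauss_lt2 hq3 hji
      have hAv : A H = Q ^ (e * j) * gaussBinom Q (d - i) j := by
        simp only [hA, bilinA, hHv, Nat.sub_self]
        rw [gauss_self hq1, show Nat.choose 0 2 = 0 from rfl]
        ring
      rw [hAv, hexp, pow_add]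
      have pe : (0:ℚ) < Q ^ (e * j) := by positivity
      calc Q ^ (e * j) * gaussBinom Q (d - i) j
          < Q ^ (e * j) * (2 * Q ^ (j * (d - i - j))) := mul_lt_mul_of_pos_left g2 pe
        _ = 2 * (Q ^ (e * j) * Q ^ (j * (d - i - j))) := by ring
    · have hHv : H = d - i := by omega
      have hexp : bilinS d e i j
          = (e * (d - i) + (j - (d - i)).choose 2) + (d - j) * (i - (d - j)) := by
        rw [bilinS, show min j (d - i) = d - i by omega,
          show d + e - i - (d - i) = e by omega, show i - (d - j) = j - (d - i) by omega]
        ring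
      have g1 : gaussBinom Q (d - (d - i)) (d - j) < 2 * Q ^ ((d - j) * (i - (d - j))) := by
        rw [show d - (d - i) = i by omega]
        exact gauss_lt2 hq3 (by omega)
      have hAv : A H = Q ^ (e * (d - i) + (j - (d - i)).choose 2) *
          gaussBinom Q (d - (d - i)) (d - j) := by
        simp only [hA, bilinA, hHv]
        rw [gauss_self hq1]
        ring
      rw [hAv, hexp]
      have pe : (0:ℚ) < Q ^ (e * (d - i) + (j - (d - i)).choose 2) := by positivity
      calc Q ^ (e * (d - i) + (j - (d - i)).choose 2) * gaussBinom Q (d - (d - i)) (d - j)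
          < Q ^ (e * (d - i) + (j - (d - i)).choose 2) * (2 * Q ^ ((d - j) * (i - (d - j)))) :=
            mul_lt_mul_of_pos_left g1 pe
        _ = 2 * Q ^ (e * (d - i) + (j - (d - i)).choose 2 + (d - j) * (i - (d - j))) := by
            rw [pow_add]; ring
  constructor
  · rw [habs]
    have : (1 / 4 : ℚ) * Q ^ bilinS d e i j ≤ (1 / 4 : ℚ) * A H := by linarith
    linarith
  · rw [habs]
    linarith
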